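/- For all integers n ≥ 1 and 0 ≤ k ≤ n, the Dicke-state amplitude function f : {0,1}^n → ℂ, defined by f(v) = 1 if v1 + ⋯ + vn = k and f(v) = 0 otherwise, is exactly representable by an RBM with at most 2n hidden neurons. -/

import Mathlib

open Complex

/-- A function `f : {0,1}^n → ℂ` is exactly representable by a restricted Boltzmann machine
with `m` hidden neurons if there are complex parameters `a i`, `b j`, `W i j` and a nonzero
constant `C` with
`f v = C · exp(∑ i, a i v i) · ∏ j, (1 + exp(b j + ∑ i, W i j v i))` for all `v ∈ {0,1}^n`. -/
def RBMRepresentable (n m : ℕ) (f : (Fin n → Bool) → ℂ) : Prop :=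
  ∃ (C : ℂ) (a : Fin n → ℂ) (b : Fin m → ℂ) (W : Fin n → Fin m → ℂ),
    C ≠ 0 ∧ ∀ v : Fin n → Bool,
      f v = C * Complex.exp (∑ i, a i * (if v i then 1 else 0)) *
        ∏ j, (1 + Complex.exp (b j + ∑ i, W i j * (if v i then 1 else 0)))

lemma factor_ne_zero (n : ℕ) (d : ℤ) (hd : d ≠ 0) (hle : d.natAbs ≤ n) :
    1 + Complex.exp (↑Real.pi * I * (1 + (d : ℂ) / (n + 1))) ≠ 0 := by
  intro h
  have h1 : Complex.exp (↑Real.pi * I * (1 + (d:ℂ)/(n+1))) = -1 := by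
    linear_combination h
  have h2 : Complex.exp (↑Real.pi * I * (1 + (d:ℂ)/(n+1)) - ↑Real.pi*I) = 1 := by
    rw [Complex.exp_sub, h1, Complex.exp_pi_mul_I]; norm_num
  rw [Complex.exp_eq_one_iff] at h2
  obtain ⟨m, hm⟩ := h2
  have hπ : (Real.pi:ℂ) ≠ 0 := by exact_mod_cast Real.pi_ne_zero
  have hN : ((n:ℂ)+1) ≠ 0 := Nat.cast_add_one_ne_zero n
  have hdm : (d:ℂ) = m * (2*((n:ℂ)+1)) := by
    field_simp at hm
    have hπI : (Real.pi:ℂ) * I ≠ 0 := mul_ne_zero hπ I_ne_zero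
    have key : (Real.pi:ℂ) * I * (d:ℂ) = (Real.pi:ℂ) * I * ((m:ℂ) * (2*((n:ℂ)+1))) := by
      linear_combination ((Real.pi:ℂ) * I) * hm
    exact mul_left_cancel₀ hπI key
  have hdz : d = m * (2*((n:ℤ)+1)) := by exact_mod_cast hdm
  rcases eq_or_ne m 0 with rfl | hm0
  · simp at hdz; omega
  · have h1m : (1:ℤ) ≤ |m| := Int.one_le_abs hm0
    have hna : d.natAbs = (m * (2*((n:ℤ)+1))).natAbs := by rw [hdz]
    rw [Int.natAbs_mul] at hna
    have h2n : (2*((n:ℤ)+1)).natAbs = 2*(n+1) := by omega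
    have hma : 1 ≤ m.natAbs := by
      have := Int.natAbs_pos.mpr hm0; omega
    rw [h2n] at hna
    nlinarith [hna, hma, hle]

/-- For all integers `n ≥ 1` and `0 ≤ k ≤ n`, the Dicke-state amplitude
function (the indicator of Hamming-weight-`k` bit strings on `n` bits) is exactly
representable by an RBM with at most `2n` hidden neurons. -/
theorem dicke_state_representable (n k : ℕ) (hn : 1 ≤ n) (hk : k ≤ n) :
    ∃ m ≤ 2 * n,
      RBMRepresentable n m
        (fun v => if (∑ i, (if v i then 1 else 0 : ℕ)) = k then (1 : ℂ) else 0) := by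
  refine ⟨n, by omega, ?_⟩
  set s : Fin n → ℕ := fun j => if (j:ℕ) < k then (j:ℕ) else (j:ℕ)+1 with hs
  have hsne : ∀ j : Fin n, s j ≠ k := by
    intro j; simp only [hs]; split <;> omega
  have hsle : ∀ j : Fin n, s j ≤ n := by
    intro j; have := j.isLt; simp only [hs]; split <;> omega
  have hssur : ∀ t : ℕ, t ≤ n → t ≠ k → ∃ j : Fin n, s j = t := by
    intro t htn htk
    rcases lt_or_gt_of_ne htk with hlt | hgt
    · exact ⟨⟨t, by omega⟩, by simp only [hs, Fin.val_mk]; split <;> omega⟩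
    · refine ⟨⟨t-1, by omega⟩, ?_⟩
      simp only [hs, Fin.val_mk]; split <;> omega
  set w : ℂ := ↑Real.pi * I / ((n:ℂ)+1) with hw
  set b : Fin n → ℂ := fun j => ↑Real.pi * I - (s j : ℂ) * w with hb
  have hN : ((n:ℂ)+1) ≠ 0 := Nat.cast_add_one_ne_zero n
  have hexp : ∀ (j : Fin n) (t : ℕ),
      b j + w * (t:ℂ) = ↑Real.pi * I * (1 + ((t:ℂ) - (s j : ℂ))/((n:ℂ)+1)) := by
    intro j t
    simp only [hb, hw]
    field_simp
    ring
  set P : ℂ := ∏ j : Fin n,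
    (1 + Complex.exp (↑Real.pi * I * (1 + ((k:ℂ) - (s j : ℂ))/((n:ℂ)+1)))) with hP
  have hPne : P ≠ 0 := by
    rw [hP]
    apply Finset.prod_ne_zero_iff.2
    intro j _
    have hcast : ((k:ℂ) - (s j : ℂ)) = (((k:ℤ) - (s j : ℤ) : ℤ) : ℂ) := by push_cast; ring
    rw [hcast]
    apply factor_ne_zero n ((k:ℤ) - (s j : ℤ))
    · have := hsne j; omega
    · have := hsle j; omega
  refine ⟨P⁻¹, 0, b, fun _ _ => w, inv_ne_zero hPne, ?_⟩
  intro v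
  set t := ∑ i, (if v i then 1 else 0 : ℕ) with ht
  have htn : t ≤ n := by
    rw [ht]
    calc ∑ i, (if v i then 1 else 0 : ℕ) ≤ ∑ _i : Fin n, 1 :=
          Finset.sum_le_sum (fun i _ => by split <;> omega)
      _ = n := by simp
  have hsum : (∑ i, w * (if v i then (1:ℂ) else 0)) = w * (t:ℂ) := by
    rw [← Finset.mul_sum]
    congr 1
    rw [ht]
    push_cast
    rfl
  have hprod : (∏ j, (1 + Complex.exp (b j + ∑ i, w * (if v i then (1:ℂ) else 0))))
      = ∏ j : Fin n, (1 + Complex.exp (↑Real.pi * I * (1 + ((t:ℂ) - (s j : ℂ))/((n:ℂ)+1)))) :=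
    Finset.prod_congr rfl fun j _ => by rw [hsum, hexp j t]
  show (if (∑ i, (if v i then 1 else 0 : ℕ)) = k then (1:ℂ) else 0)
      = P⁻¹ * Complex.exp (∑ i, (0:ℂ) * (if v i then 1 else 0))
        * ∏ j, (1 + Complex.exp (b j + ∑ i, w * (if v i then (1:ℂ) else 0)))
  simp only [zero_mul, Finset.sum_const_zero, Complex.exp_zero, mul_one]
  rw [hprod, ← ht]
  by_cases htk : t = k
  · subst htk
    rw [← hP, inv_mul_cancel₀ hPne]
    simp
  · rw [if_neg htk]
    obtain ⟨j, hj⟩ := hssur t htn htk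
    have hz : 1 + Complex.exp (↑Real.pi * I * (1 + ((t:ℂ) - (s j : ℂ))/((n:ℂ)+1))) = 0 := by
      rw [hj]
      have : ((t:ℂ) - (t:ℂ))/((n:ℂ)+1) = 0 := by simp
      rw [this]
      norm_num [Complex.exp_pi_mul_I]
    rw [Finset.prod_eq_zero (Finset.mem_univ j) hz, mul_zero]
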